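/- Let y be a finitely supported probability vector, and let x be a finitely supported probability vector such that there exists an infinite probability vector z ∈ ℓ¹ with x ⊗ z ≺ y ⊗ z (infinite-dimensional catalysis). Then x lies in the ℓ¹-closure of the set of finitely supported probability vectors x' for which there exists a finitely supported catalyst z' with x' ⊗ z' ≺ y ⊗ z'. -/

import Mathlib

open scoped BigOperators

noncomputable def kMaxSum {ι : Type*} (f : ι → ℝ) (k : ℕ) : ℝ :=
  sSup {t : ℝ | ∃ A : Finset ι, A.card = k ∧ ∑ i ∈ A, f i = t}

def Submaj {ι κ : Type*} (f : ι → ℝ) (g : κ → ℝ) : Prop :=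
  ∀ k : ℕ, kMaxSum f k ≤ kMaxSum g k

def MajT {ι κ : Type*} (f : ι → ℝ) (g : κ → ℝ) : Prop :=
  (∑' i, f i = ∑' j, g j) ∧ Submaj f g

def tensor {ι κ : Type*} (f : ι → ℝ) (g : κ → ℝ) : ι × κ → ℝ :=
  fun p => f p.1 * g p.2

def IsFinProbVec (f : ℕ → ℝ) : Prop :=
  (∀ i, 0 ≤ f i) ∧ (Function.support f).Finite ∧ ∑' i, f i = 1

section helpers

variable {ι κ : Type*}

lemma summable_tensor {f : ι → ℝ} {g : κ → ℝ} (hf0 : ∀ i, 0 ≤ f i) (hg0 : ∀ j, 0 ≤ g j)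
    (hf : Summable f) (hg : Summable g) : Summable (tensor f g) :=
  hf.mul_of_nonneg hg hf0 hg0

lemma tsum_tensor {f : ι → ℝ} {g : κ → ℝ} (hf0 : ∀ i, 0 ≤ f i) (hg0 : ∀ j, 0 ≤ g j)
    (hf : Summable f) (hg : Summable g) :
    ∑' p, tensor f g p = (∑' i, f i) * ∑' j, g j := by
  have hsum : Summable (fun p : ι × κ => f p.1 * g p.2) := summable_tensor hf0 hg0 hf hg
  calc ∑' p, tensor f g p = ∑' i, ∑' j, f i * g j :=
        Summable.tsum_prod' hsum (fun b => hg.mul_left (f b))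
    _ = ∑' i, f i * ∑' j, g j := tsum_congr fun i => tsum_mul_left
    _ = (∑' i, f i) * ∑' j, g j := tsum_mul_right

lemma le_kMaxSum {f : ι → ℝ} (hf0 : ∀ i, 0 ≤ f i) (hf : Summable f)
    {k : ℕ} {A : Finset ι} (hA : A.card = k) : ∑ i ∈ A, f i ≤ kMaxSum f k :=
  le_csSup ⟨∑' i, f i, fun t ht => by
    obtain ⟨B, _, rfl⟩ := ht; exact Summable.sum_le_tsum B (fun i _ => hf0 i) hf⟩ ⟨A, hA, rfl⟩

lemma kMaxSum_le [Infinite ι] {f : ι → ℝ} {k : ℕ} {C : ℝ}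
    (h : ∀ A : Finset ι, A.card = k → ∑ i ∈ A, f i ≤ C) : kMaxSum f k ≤ C := by
  obtain ⟨A, hA⟩ := Infinite.exists_subset_card_eq ι k
  refine csSup_le ⟨_, ⟨A, hA, rfl⟩⟩ ?_
  rintro t ⟨B, hB, rfl⟩
  exact h B hB

lemma kMaxSum_zero (f : ι → ℝ) : kMaxSum f 0 = 0 := by
  have h : {t : ℝ | ∃ A : Finset ι, A.card = 0 ∧ ∑ i ∈ A, f i = t} = {0} := by
    ext t
    simp [Finset.card_eq_zero, eq_comm]
  rw [kMaxSum, h, csSup_singleton]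

lemma kMaxSum_eq_tsum [Infinite ι] {f : ι → ℝ} (hf0 : ∀ i, 0 ≤ f i) (hf : Summable f)
    {S : Finset ι} (hS : ∀ i, f i ≠ 0 → i ∈ S) {k : ℕ} (hk : S.card ≤ k) :
    kMaxSum f k = ∑' i, f i := by
  refine le_antisymm (kMaxSum_le fun A _ => Summable.sum_le_tsum A (fun i _ => hf0 i) hf) ?_
  obtain ⟨A, hSA, hA⟩ := Infinite.exists_superset_card_eq S k hk
  calc ∑' i, f i = ∑ i ∈ A, f i :=
        tsum_eq_sum (fun i hi => by_contra fun h => hi (hSA (hS i h)))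
    _ ≤ kMaxSum f k := le_kMaxSum hf0 hf hA

end helpers

set_option maxHeartbeats 2000000 in
/-- If `x` is trumped by `y` using a possibly infinite-dimensional catalyst
`z ∈ ℓ¹`, then `x` lies in the ℓ¹-closure of the set of finitely supported
probability vectors trumped by `y` with a finitely supported catalyst. -/
theorem infinite_catalysis_in_closure (x y : ℕ → ℝ)
    (hx : IsFinProbVec x) (hy : IsFinProbVec y)
    (z : ℕ → ℝ) (hz0 : ∀ i, 0 ≤ z i) (hzsum : Summable z) (hz1 : ∑' i, z i = 1)
    (hmaj : MajT (tensor x z) (tensor y z)) :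
    ∀ ε : ℝ, 0 < ε → ∃ x' : ℕ → ℝ, IsFinProbVec x' ∧ (∑' i, |x i - x' i|) ≤ ε ∧
      ∃ z' : ℕ → ℝ, IsFinProbVec z' ∧ MajT (tensor x' z') (tensor y z') := by
  obtain ⟨hx0, hxfin, hx1⟩ := hx
  obtain ⟨hy0, hyfin, hy1⟩ := hy
  intro ε hε
  have hxsum : Summable x := by
    apply summable_of_ne_finset_zero (s := hxfin.toFinset)
    intro i hi
    by_contra h
    exact hi (hxfin.mem_toFinset.2 h)
  have hysum : Summable y := by
    apply summable_of_ne_finset_zero (s := hyfin.toFinset)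
    intro i hi
    by_contra h
    exact hi (hyfin.mem_toFinset.2 h)
  obtain ⟨i0, hi0⟩ : ∃ i, y i ≠ 0 := by
    by_contra h; push_neg at h; simp [h] at hy1
  obtain ⟨j0, hj0⟩ : ∃ j, z j ≠ 0 := by
    by_contra h; push_neg at h; simp [h] at hz1
  have hi0' : 0 < y i0 := (hy0 i0).lt_of_ne (Ne.symm hi0)
  have hj0' : 0 < z j0 := (hz0 j0).lt_of_ne (Ne.symm hj0)
  set c : ℝ := min ε 1 / 2 with hc_def
  have hc0 : 0 < c := div_pos (lt_min hε one_pos) two_pos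
  have hc12 : c ≤ 1/2 := by
    have h := min_le_right ε 1
    rw [hc_def]; linarith
  have hcε : 2 * c ≤ ε := by
    have h := min_le_left ε 1
    rw [hc_def]; linarith
  have hyle : ∀ i, y i ≤ 1 := fun i => hy1 ▸ Summable.le_tsum hysum i (fun j _ => hy0 j)
  have hzle : ∀ j, z j ≤ 1 := fun j => hz1 ▸ Summable.le_tsum hzsum j (fun i _ => hz0 i)
  set m0 : ℝ := y i0 * z j0 with hm0_def
  have hm0 : 0 < m0 := mul_pos hi0' hj0'
  have hm01 : m0 ≤ 1 := by nlinarith [hyle i0, hzle j0, hz0 j0, hy0 i0]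
  have htend : Filter.Tendsto (fun n => ∑ j ∈ Finset.range n, z j) Filter.atTop (nhds 1) := by
    simpa [hz1] using hzsum.hasSum.tendsto_sum_nat
  have hev : ∀ᶠ n in Filter.atTop, 1 - c * m0 / 8 < ∑ j ∈ Finset.range n, z j :=
    htend.eventually (eventually_gt_nhds (by nlinarith))
  obtain ⟨n, hn1, hn2⟩ := (hev.and (Filter.eventually_gt_atTop j0)).exists
  set s : ℝ := ∑ j ∈ Finset.range n, z j with hs_def
  have hs1 : s ≤ 1 := hz1 ▸ Summable.sum_le_tsum _ (fun j _ => hz0 j) hzsum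
  have hs_lb : 1 - c * m0 / 8 < s := hn1
  have hs_half : 1/2 ≤ s := by nlinarith
  have hs_pos : 0 < s := by linarith
  set zn : ℕ → ℝ := fun j => if j < n then z j else 0 with hzn_def
  set z' : ℕ → ℝ := fun j => zn j / s with hz'_def
  have hzn0 : ∀ j, 0 ≤ zn j := fun j => by
    rw [hzn_def]; dsimp only; split <;> simp [hz0 j]
  have hznle : ∀ j, zn j ≤ z j := fun j => by
    rw [hzn_def]; dsimp only; split <;> simp [hz0 j]
  have hznz : ∀ j, ¬ j < n → zn j = 0 := fun j hj => by
    rw [hzn_def]; dsimp only; rw [if_neg hj]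
  have hznsum : Summable zn := by
    apply summable_of_ne_finset_zero (s := Finset.range n)
    intro j hj
    exact hznz j (by simpa [Finset.mem_range] using hj)
  have hzn_tsum : ∑' j, zn j = s := by
    rw [tsum_eq_sum (s := Finset.range n)
      (fun j hj => hznz j (by simpa [Finset.mem_range] using hj)), hs_def]
    apply Finset.sum_congr rfl
    intro j hj
    rw [hzn_def]; dsimp only; rw [if_pos (Finset.mem_range.1 hj)]
  have hz'0 : ∀ j, 0 ≤ z' j := fun j => by
    rw [hz'_def]; exact div_nonneg (hzn0 j) hs_pos.le
  have hz'sum : Summable z' := by rw [hz'_def]; exact hznsum.div_const s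
  have hz'_tsum : ∑' j, z' j = 1 := by
    rw [hz'_def]
    rw [tsum_div_const, hzn_tsum, div_self hs_pos.ne']
  have hz'z : ∀ j, ¬ j < n → z' j = 0 := fun j hj => by
    rw [hz'_def]; dsimp only; rw [hznz j hj, zero_div]
  have hz'fin : (Function.support z').Finite := by
    apply Set.Finite.subset (Finset.range n).finite_toSet
    intro j hj
    simp only [Function.mem_support] at hj
    simp only [Finset.coe_range, Set.mem_Iio]
    by_contra h
    exact hj (hz'z j h)
  have hz'le : ∀ j, z' j ≤ 1 / s := fun j => by
    rw [hz'_def]; dsimp only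
    exact (div_le_div_iff_of_pos_right hs_pos).2 ((hznle j).trans (hzle j))
  have hz'ge : z j0 ≤ z' j0 := by
    rw [hz'_def]; dsimp only
    rw [hzn_def]; dsimp only; rw [if_pos hn2]
    rw [le_div_iff₀ hs_pos]
    nlinarith [hz0 j0]
  -- the finite sets controlling supports
  set Sy : Finset ℕ := hyfin.toFinset with hSy_def
  have hySy : ∀ i, y i ≠ 0 → i ∈ Sy := fun i h => hyfin.mem_toFinset.2 h
  set M : ℕ := (Sy ×ˢ Finset.range n).card with hM_def
  set N : ℕ := max 1 ⌈4 * (M : ℝ) / m0⌉₊ with hN_def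
  have hN1 : 1 ≤ N := le_max_left _ _
  have hN0 : 0 < (N : ℝ) := by exact_mod_cast Nat.lt_of_lt_of_le one_pos hN1
  have hNM : 4 * (M : ℝ) / m0 ≤ (N : ℝ) := by
    refine le_trans (Nat.le_ceil _) ?_
    rw [hN_def]
    exact_mod_cast le_max_right 1 ⌈4 * (M : ℝ) / m0⌉₊
  have hNM' : 4 * (M : ℝ) ≤ (N : ℝ) * m0 := by
    rw [div_le_iff₀ hm0] at hNM; linarith
  set u : ℕ → ℝ := fun i => if i < N then 1 / (N : ℝ) else 0 with hu_def
  have hu0 : ∀ i, 0 ≤ u i := fun i => by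
    rw [hu_def]; dsimp only; split <;> positivity
  have huz : ∀ i, ¬ i < N → u i = 0 := fun i hi => by
    rw [hu_def]; dsimp only; rw [if_neg hi]
  have hule : ∀ i, u i ≤ 1 / (N : ℝ) := fun i => by
    rw [hu_def]; dsimp only; split
    · exact le_refl _
    · positivity
  have husum : Summable u := by
    apply summable_of_ne_finset_zero (s := Finset.range N)
    intro i hi
    exact huz i (by simpa [Finset.mem_range] using hi)
  have hu_tsum : ∑' i, u i = 1 := by
    rw [tsum_eq_sum (s := Finset.range N)
      (fun i hi => huz i (by simpa [Finset.mem_range] using hi))]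
    have he : ∀ i ∈ Finset.range N, u i = 1 / (N : ℝ) := fun i hi => by
      rw [hu_def]; dsimp only; rw [if_pos (Finset.mem_range.1 hi)]
    rw [Finset.sum_congr rfl he, Finset.sum_const, Finset.card_range, nsmul_eq_mul]
    field_simp
  set x' : ℕ → ℝ := fun i => (1 - c) * x i + c * u i with hx'_def
  have hx'0 : ∀ i, 0 ≤ x' i := fun i => by
    rw [hx'_def]; dsimp only
    have := hx0 i; have := hu0 i
    nlinarith
  have hx'fin : (Function.support x').Finite := by
    apply Set.Finite.subset (hxfin.union (Finset.range N).finite_toSet)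
    intro i hi
    simp only [Function.mem_support] at hi
    by_contra h
    simp only [Set.mem_union, Function.mem_support, Finset.coe_range, Set.mem_Iio,
      not_or, not_not, not_lt] at h
    apply hi
    rw [hx'_def]; dsimp only
    rw [h.1, huz i (not_lt.2 h.2)]; ring
  have hx'sum : Summable x' := by
    rw [hx'_def]; exact (hxsum.mul_left _).add (husum.mul_left _)
  have hx'_tsum : ∑' i, x' i = 1 := by
    rw [hx'_def, Summable.tsum_add (hxsum.mul_left _) (husum.mul_left _),
      tsum_mul_left, tsum_mul_left, hx1, hu_tsum]
    ring
  -- distance bound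
  have hdist : (∑' i, |x i - x' i|) ≤ ε := by
    have he : ∀ i, |x i - x' i| = c * |x i - u i| := fun i => by
      have h1 : x i - x' i = c * (x i - u i) := by rw [hx'_def]; dsimp only; ring
      rw [h1, abs_mul, abs_of_pos hc0]
    have hsub : Summable (fun i => |x i - u i|) := (hxsum.sub husum).abs
    have hbound : ∑' i, |x i - u i| ≤ ∑' i, (x i + u i) := by
      apply Summable.tsum_le_tsum ?_ hsub (hxsum.add husum)
      intro i
      calc |x i - u i| ≤ |x i| + |u i| := abs_sub _ _
        _ = x i + u i := by rw [abs_of_nonneg (hx0 i), abs_of_nonneg (hu0 i)]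
    have h2 : ∑' i, (x i + u i) = 2 := by
      rw [Summable.tsum_add hxsum husum, hx1, hu_tsum]; norm_num
    calc (∑' i, |x i - x' i|) = c * ∑' i, |x i - u i| := by
          rw [tsum_congr he, tsum_mul_left]
      _ ≤ c * 2 := by nlinarith [hbound]
      _ ≤ ε := by linarith
  -- tensor facts
  have hT0 : ∀ (f g : ℕ → ℝ), (∀ i, 0 ≤ f i) → (∀ j, 0 ≤ g j) → ∀ p : ℕ × ℕ, 0 ≤ tensor f g p :=
    fun f g hf hg p => mul_nonneg (hf _) (hg _)
  have ht_xz : Summable (tensor x z) := summable_tensor hx0 hz0 hxsum hzsum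
  have ht_yz' : Summable (tensor y z') := summable_tensor hy0 hz'0 hysum hz'sum
  have ht_x'z' : Summable (tensor x' z') := summable_tensor hx'0 hz'0 hx'sum hz'sum
  have h_tsum_yz' : ∑' p, tensor y z' p = 1 := by
    rw [tsum_tensor hy0 hz'0 hysum hz'sum, hy1, hz'_tsum]; ring
  have h_tsum_x'z' : ∑' p, tensor x' z' p = 1 := by
    rw [tsum_tensor hx'0 hz'0 hx'sum hz'sum, hx'_tsum, hz'_tsum]; ring
  have hsupp_yz' : ∀ p : ℕ × ℕ, tensor y z' p ≠ 0 → p ∈ Sy ×ˢ Finset.range n := by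
    intro p hp
    rw [Finset.mem_product, Finset.mem_range]
    constructor
    · apply hySy
      intro h
      exact hp (by simp [tensor, h])
    · by_contra h
      exact hp (by simp [tensor, hz'z p.2 h])
  refine ⟨x', ⟨hx'0, hx'fin, hx'_tsum⟩, hdist, z', ⟨hz'0, hz'fin, hz'_tsum⟩,
    by rw [h_tsum_x'z', h_tsum_yz'], ?_⟩
  -- the submajorization
  intro k
  rcases Nat.eq_zero_or_pos k with rfl | hk1
  · simp [kMaxSum_zero]
  by_cases hkM : k ≤ M
  · -- main case : use the slack created by mixing with u
    have hYm0 : m0 ≤ kMaxSum (tensor y z') k := by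
      obtain ⟨A, hsubA, hA⟩ :=
        Infinite.exists_superset_card_eq ({((i0, j0) : ℕ × ℕ)} : Finset (ℕ × ℕ)) k
          (by simp only [Finset.card_singleton]; omega)
      calc m0 ≤ tensor y z' (i0, j0) := by
            rw [hm0_def]
            exact mul_le_mul_of_nonneg_left hz'ge (hy0 i0)
        _ ≤ ∑ p ∈ A, tensor y z' p :=
            Finset.single_le_sum (fun p _ => hT0 y z' hy0 hz'0 p)
              (hsubA (Finset.mem_singleton_self _))
        _ ≤ kMaxSum (tensor y z') k := le_kMaxSum (hT0 y z' hy0 hz'0) ht_yz' hA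
    set Ek : ℝ := kMaxSum (tensor y z') k with hEk_def
    have hEk0 : 0 ≤ Ek := le_trans hm0.le hYm0
    apply kMaxSum_le
    intro A hA
    have hsplit : ∑ p ∈ A, tensor x' z' p
        = (1 - c) * ∑ p ∈ A, tensor x z' p + c * ∑ p ∈ A, tensor u z' p := by
      rw [Finset.mul_sum, Finset.mul_sum, ← Finset.sum_add_distrib]
      apply Finset.sum_congr rfl
      intro p _
      rw [hx'_def]; simp only [tensor]; ring
    have hxpart : ∑ p ∈ A, tensor x z' p ≤ (s * Ek + (1 - s)) / s := by
      have e1 : ∑ p ∈ A, tensor x z' p = (∑ p ∈ A, tensor x zn p) / s := by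
        rw [Finset.sum_div]
        apply Finset.sum_congr rfl
        intro p _
        rw [hz'_def]; simp only [tensor]; ring
      rw [e1, div_le_div_iff₀ hs_pos hs_pos]
      have hmain : ∑ p ∈ A, tensor x zn p ≤ s * Ek + (1 - s) := by
        calc ∑ p ∈ A, tensor x zn p ≤ ∑ p ∈ A, tensor x z p :=
              Finset.sum_le_sum (fun p _ =>
                mul_le_mul_of_nonneg_left (hznle _) (hx0 _))
          _ ≤ kMaxSum (tensor x z) k := le_kMaxSum (hT0 x z hx0 hz0) ht_xz hA
          _ ≤ kMaxSum (tensor y z) k := hmaj.2 k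
          _ ≤ s * Ek + (1 - s) := by
              apply kMaxSum_le
              intro B hB
              have hw0 : ∀ j, 0 ≤ z j - zn j := fun j => by linarith [hznle j]
              have hwsum : Summable (fun j => z j - zn j) := hzsum.sub hznsum
              have e2 : ∑ p ∈ B, tensor y z p
                  = ∑ p ∈ B, tensor y zn p + ∑ p ∈ B, tensor y (fun j => z j - zn j) p := by
                rw [← Finset.sum_add_distrib]
                apply Finset.sum_congr rfl
                intro p _
                simp only [tensor]; ring
              rw [e2]
              have h_first : ∑ p ∈ B, tensor y zn p ≤ s * Ek := by
                have e3 : ∑ p ∈ B, tensor y zn p = s * ∑ p ∈ B, tensor y z' p := by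
                  rw [Finset.mul_sum]
                  apply Finset.sum_congr rfl
                  intro p _
                  rw [hz'_def]; simp only [tensor]
                  field_simp
                rw [e3, hEk_def]
                exact mul_le_mul_of_nonneg_left
                  (le_kMaxSum (hT0 y z' hy0 hz'0) ht_yz' hB) hs_pos.le
              have h_second : ∑ p ∈ B, tensor y (fun j => z j - zn j) p ≤ 1 - s := by
                calc ∑ p ∈ B, tensor y (fun j => z j - zn j) p
                    ≤ ∑' p, tensor y (fun j => z j - zn j) p :=
                      Summable.sum_le_tsum B (fun p _ => hT0 _ _ hy0 hw0 p)
                        (summable_tensor hy0 hw0 hysum hwsum)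
                  _ = 1 * (1 - s) := by
                      rw [tsum_tensor hy0 hw0 hysum hwsum, hy1,
                        Summable.tsum_sub hzsum hznsum, hz1, hzn_tsum]
                  _ = 1 - s := one_mul _
              linarith
      nlinarith [hmain]
    have hupart : ∑ p ∈ A, tensor u z' p ≤ (k : ℝ) * (1 / ((N : ℝ) * s)) := by
      calc ∑ p ∈ A, tensor u z' p ≤ ∑ _p ∈ A, 1 / ((N : ℝ) * s) := by
            apply Finset.sum_le_sum
            intro p _
            calc tensor u z' p = u p.1 * z' p.2 := rfl
              _ ≤ (1 / (N : ℝ)) * (1 / s) :=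
                  mul_le_mul (hule _) (hz'le _) (hz'0 _) (by positivity)
              _ = 1 / ((N : ℝ) * s) := by rw [div_mul_div_comm, one_mul]
        _ = (k : ℝ) * (1 / ((N : ℝ) * s)) := by
            rw [Finset.sum_const, hA, nsmul_eq_mul]
    have h1 : (1 - s) / s ≤ c * m0 / 4 := by
      rw [div_le_iff₀ hs_pos]
      nlinarith [mul_nonneg (mul_nonneg hc0.le hm0.le) (by linarith : (0:ℝ) ≤ s - 1/2)]
    have h2 : (k : ℝ) * (1 / ((N : ℝ) * s)) ≤ m0 / 2 := by
      have hkM' : (k : ℝ) ≤ (M : ℝ) := by exact_mod_cast hkM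
      rw [mul_one_div, div_le_iff₀ (by positivity)]
      nlinarith [mul_nonneg (mul_nonneg hm0.le hN0.le) (by linarith : (0:ℝ) ≤ s - 1/2)]
    calc ∑ p ∈ A, tensor x' z' p
        = (1 - c) * ∑ p ∈ A, tensor x z' p + c * ∑ p ∈ A, tensor u z' p := hsplit
      _ ≤ (1 - c) * ((s * Ek + (1 - s)) / s) + c * ((k : ℝ) * (1 / ((N : ℝ) * s))) := by
          have hc1 : (0:ℝ) ≤ 1 - c := by linarith
          exact add_le_add (mul_le_mul_of_nonneg_left hxpart hc1)
            (mul_le_mul_of_nonneg_left hupart hc0.le)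
      _ ≤ Ek := by
          have e : (s * Ek + (1 - s)) / s = Ek + (1 - s) / s := by
            field_simp
          rw [e]
          have ha0 : 0 ≤ (1 - s) / s := div_nonneg (by linarith) hs_pos.le
          nlinarith [mul_le_mul_of_nonneg_left h2 hc0.le,
            mul_le_mul_of_nonneg_left hYm0 hc0.le,
            mul_nonneg hc0.le ha0]
  · -- large k : both sides are the full sum
    push_neg at hkM
    have hY1 : kMaxSum (tensor y z') k = 1 := by
      rw [kMaxSum_eq_tsum (hT0 y z' hy0 hz'0) ht_yz' hsupp_yz' (le_of_lt hkM), h_tsum_yz']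
    rw [hY1]
    apply kMaxSum_le
    intro A hA
    calc ∑ p ∈ A, tensor x' z' p ≤ ∑' p, tensor x' z' p :=
          Summable.sum_le_tsum A (fun p _ => hT0 x' z' hx'0 hz'0 p) ht_x'z'
      _ = 1 := h_tsum_x'z'
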